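/- If H is a predictable process and S is a martingale under P with respect to a filtration (F_t)_{t=0,...,T}, and the negative part of the discrete stochastic integral (H·S)_T = Σ_{u=1}^T H_u (S_u - S_{u-1}) is P-integrable, then E_P[((H·S)_T)^+] = E_P[((H·S)_T)^-]. -/

import Mathlib

open MeasureTheory Filter Finset Topology

section Helpers

private lemma abs_le_measurableSet {Ω : Type*} {m : MeasurableSpace Ω} {f g : Ω → ℝ}
    (hf : StronglyMeasurable[m] f) (hg : StronglyMeasurable[m] g) (c d : ℝ) :
    MeasurableSet[m] ({ω | |f ω| ≤ c} ∩ {ω | |g ω| ≤ d}) := by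
  have h1 : Measurable[m] fun ω => |f ω| := hf.measurable.abs
  have h2 : Measurable[m] fun ω => |g ω| := hg.measurable.abs
  exact (measurableSet_le h1 measurable_const).inter (measurableSet_le h2 measurable_const)

variable {Ω : Type*} {mΩ : MeasurableSpace Ω} {P : Measure Ω} [IsProbabilityMeasure P]

omit [IsProbabilityMeasure P] in
/-- Monotone convergence gadget: if a nonnegative function has indicator truncations along an
increasing exhausting sequence of sets, all integrable with integrals bounded by `K`, then the
function is integrable and the truncated integrals converge to its integral. -/
lemma mct_aux {f : Ω → ℝ} (hf : AEStronglyMeasurable f P) (hfnn : ∀ ω, 0 ≤ f ω)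
    {A : ℕ → Set Ω} (hmono : Monotone A)
    (hcover : ∀ ω, ∃ n, ω ∈ A n)
    (hInt : ∀ n, Integrable ((A n).indicator f) P)
    {K : ℝ} (hK : ∀ n, ∫ ω, (A n).indicator f ω ∂P ≤ K) :
    Integrable f P ∧
      Tendsto (fun n => ∫ ω, (A n).indicator f ω ∂P) atTop (𝓝 (∫ ω, f ω ∂P)) := by
  have hmono' : ∀ ω, Monotone fun n => (A n).indicator f ω := by
    intro ω i j hij
    show (A i).indicator f ω ≤ (A j).indicator f ω
    by_cases h : ω ∈ A i
    · rw [Set.indicator_of_mem h, Set.indicator_of_mem (hmono hij h)]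
    · rw [Set.indicator_of_notMem h]
      exact Set.indicator_nonneg (fun x _ => hfnn x) ω
  have htend : ∀ ω, Tendsto (fun n => (A n).indicator f ω) atTop (𝓝 (f ω)) := by
    intro ω
    obtain ⟨n, hn⟩ := hcover ω
    apply tendsto_const_nhds.congr'
    filter_upwards [eventually_ge_atTop n] with m hm
    exact (Set.indicator_of_mem (hmono hm hn) f).symm
  have hint_f : Integrable f P := by
    refine ⟨hf, ?_⟩
    rw [hasFiniteIntegral_iff_ofReal (Eventually.of_forall hfnn)]
    have h1 : Tendsto (fun n => ∫⁻ ω, ENNReal.ofReal ((A n).indicator f ω) ∂P) atTop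
        (𝓝 (∫⁻ ω, ENNReal.ofReal (f ω) ∂P)) := by
      refine lintegral_tendsto_of_tendsto_of_monotone
        (fun n => ENNReal.measurable_ofReal.comp_aemeasurable (hInt n).1.aemeasurable) ?_ ?_
      · exact Eventually.of_forall fun ω i j hij => ENNReal.ofReal_le_ofReal (hmono' ω hij)
      · exact Eventually.of_forall fun ω =>
          (ENNReal.continuous_ofReal.tendsto _).comp (htend ω)
    have h2 : ∀ n, ∫⁻ ω, ENNReal.ofReal ((A n).indicator f ω) ∂P ≤ ENNReal.ofReal K := by
      intro n
      rw [← ofReal_integral_eq_lintegral_ofReal (hInt n)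
        (Eventually.of_forall (Set.indicator_nonneg fun x _ => hfnn x))]
      exact ENNReal.ofReal_le_ofReal (hK n)
    exact lt_of_le_of_lt (le_of_tendsto' h1 h2) ENNReal.ofReal_lt_top
  exact ⟨hint_f, integral_tendsto_of_tendsto_of_monotone hInt hint_f
    (Eventually.of_forall hmono') (Eventually.of_forall htend)⟩

/-- The key induction: the discrete stochastic integral, if its negative part is integrable,
is integrable with zero expectation. -/
lemma discrete_integral_key (ℱ : Filtration ℕ mΩ)
    (S H : ℕ → Ω → ℝ) (hS : Martingale S ℱ P)
    (hH : ∀ t : ℕ, 1 ≤ t → StronglyMeasurable[ℱ (t - 1)] (H t)) :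
    ∀ T : ℕ,
      Integrable (fun ω => max (-(∑ u ∈ Finset.Icc 1 T, H u ω * (S u ω - S (u - 1) ω))) 0) P →
      Integrable (fun ω => ∑ u ∈ Finset.Icc 1 T, H u ω * (S u ω - S (u - 1) ω)) P ∧
        ∫ ω, ∑ u ∈ Finset.Icc 1 T, H u ω * (S u ω - S (u - 1) ω) ∂P = 0 := by
  intro T
  induction T with
  | zero =>
    intro _
    constructor <;> simp
  | succ T ih =>
    intro hneg
    -- notation
    set Y : Ω → ℝ := fun ω => ∑ u ∈ Finset.Icc 1 T, H u ω * (S u ω - S (u - 1) ω) with hYdef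
    set D : Ω → ℝ := fun ω => S (T + 1) ω - S T ω with hDdef
    set Z : Ω → ℝ := fun ω => H (T + 1) ω * D ω with hZdef
    have hsum : ∀ ω, (∑ u ∈ Finset.Icc 1 (T + 1), H u ω * (S u ω - S (u - 1) ω))
        = Y ω + Z ω := by
      intro ω
      rw [Finset.sum_Icc_succ_top (Nat.one_le_iff_ne_zero.mpr (Nat.succ_ne_zero T))]
      simp [hYdef, hZdef, hDdef]
    have hh : StronglyMeasurable[ℱ T] (H (T + 1)) := by
      simpa using hH (T + 1) (Nat.le_add_left 1 T)
    -- Y is ℱ T strongly measurable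
    have hYm : StronglyMeasurable[ℱ T] Y := by
      apply Finset.stronglyMeasurable_fun_sum
      intro u hu
      rw [Finset.mem_Icc] at hu
      have h1 : u - 1 ≤ T := le_trans (Nat.sub_le u 1) hu.2
      exact ((hH u hu.1).mono (ℱ.mono h1)).mul
        (((hS.stronglyAdapted u).mono (ℱ.mono hu.2)).sub
          ((hS.stronglyAdapted (u - 1)).mono (ℱ.mono h1)))
    have hD : Integrable D P := (hS.integrable (T + 1)).sub (hS.integrable T)
    have hZm : StronglyMeasurable Z :=
      (hh.mono (ℱ.le T)).mul
        (((hS.stronglyAdapted (T + 1)).mono (ℱ.le (T + 1))).sub ((hS.stronglyAdapted T).mono (ℱ.le T)))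
    -- conditional expectation of the increment is zero
    have hDcond : P[D | ℱ T] =ᵐ[P] 0 := by
      have h1 : P[D | ℱ T] =ᵐ[P]
          P[S (T + 1) | ℱ T] - P[S T | ℱ T] :=
        condExp_sub (hS.integrable (T + 1)) (hS.integrable T) _
      have h2 : P[S (T + 1) | ℱ T] =ᵐ[P] S T := hS.condExp_ae_eq (Nat.le_succ T)
      have h3 : P[S T | ℱ T] = S T :=
        condExp_of_stronglyMeasurable (ℱ.le T) (hS.stronglyAdapted T) (hS.integrable T)
      rw [h3] at h1
      filter_upwards [h1, h2] with ω h1 h2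
      simp only [Pi.sub_apply] at h1
      simp [h1, h2]
    -- truncation sets
    set A : ℕ → Set Ω := fun n => {ω | |H (T + 1) ω| ≤ (n : ℝ)} ∩ {ω | |Y ω| ≤ (n : ℝ)}
      with hAdef
    have hAmeas : ∀ n, MeasurableSet[ℱ T] (A n) :=
      fun n => abs_le_measurableSet hh hYm (n : ℝ) (n : ℝ)
    have hAmono : Monotone A := by
      intro i j hij ω hω
      obtain ⟨h1, h2⟩ := hω
      exact ⟨show |H (T + 1) ω| ≤ (j : ℝ) from le_trans h1 (Nat.cast_le.mpr hij),
        show |Y ω| ≤ (j : ℝ) from le_trans h2 (Nat.cast_le.mpr hij)⟩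
    have hAcover : ∀ ω, ∃ n, ω ∈ A n := by
      intro ω
      obtain ⟨n, hn⟩ := exists_nat_ge (max |H (T + 1) ω| |Y ω|)
      exact ⟨n, show |H (T + 1) ω| ≤ (n : ℝ) from le_trans (le_max_left _ _) hn,
        show |Y ω| ≤ (n : ℝ) from le_trans (le_max_right _ _) hn⟩
    -- the truncated integrand
    set φ : ℕ → Ω → ℝ := fun n => (A n).indicator (H (T + 1)) with hφdef
    have hφm : ∀ n, StronglyMeasurable[ℱ T] (φ n) := fun n => hh.indicator (hAmeas n)
    have hφbdd : ∀ n ω, ‖φ n ω‖ ≤ (n : ℝ) := by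
      intro n ω
      by_cases h : ω ∈ A n
      · rw [hφdef]; simp only [Set.indicator_of_mem h]
        exact h.1
      · rw [hφdef]; simp [Set.indicator_of_notMem h]
    have hφD_int : ∀ n, Integrable (φ n * D) P := fun n =>
      hD.bdd_mul ((hφm n).mono (ℱ.le T)).aestronglyMeasurable (Eventually.of_forall (hφbdd n))
    have hZA : ∀ n ω, (A n).indicator Z ω = φ n ω * D ω := by
      intro n ω
      by_cases h : ω ∈ A n
      · rw [Set.indicator_of_mem h, hφdef]; simp [Set.indicator_of_mem h, hZdef]
      · rw [Set.indicator_of_notMem h, hφdef]; simp [Set.indicator_of_notMem h]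
    -- conditional expectation of the truncated increment is zero
    have hφD_condzero : ∀ n, P[φ n * D | ℱ T] =ᵐ[P] 0 := by
      intro n
      have hpull : P[φ n * D | ℱ T] =ᵐ[P] φ n * P[D | ℱ T] :=
        condExp_mul_of_stronglyMeasurable_left (hφm n) (hφD_int n) hD
      filter_upwards [hpull, hDcond] with ω h1 h2
      rw [h1, Pi.mul_apply, h2]
      simp
    have hφD_zero : ∀ n, ∫ ω, (φ n * D) ω ∂P = 0 := by
      intro n
      rw [← integral_condExp (ℱ.le T), integral_congr_ae (hφD_condzero n)]
      simp
    -- X' = Y + Z, its negative part is integrable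
    have hnegX : Integrable (fun ω => max (-(Y ω + Z ω)) 0) P := by
      refine hneg.congr (Eventually.of_forall fun ω => ?_)
      simp only [hsum ω]
    -- indicator truncations of Y are integrable (they are bounded)
    have hindY_int : ∀ n, Integrable ((A n).indicator Y) P := by
      intro n
      refine Integrable.mono' (integrable_const (n : ℝ))
        ((hYm.indicator (hAmeas n)).mono (ℱ.le T)).aestronglyMeasurable
        (Eventually.of_forall fun ω => ?_)
      by_cases h : ω ∈ A n
      · rw [Set.indicator_of_mem h, Real.norm_eq_abs]; exact h.2
      · rw [Set.indicator_of_notMem h]; simp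
    -- truncations of X' = Y + Z
    set W : ℕ → Ω → ℝ := fun n => (A n).indicator Y + φ n * D with hWdef
    have hW_int : ∀ n, Integrable (W n) P := fun n => (hindY_int n).add (hφD_int n)
    have hWcond : ∀ n, P[W n | ℱ T] =ᵐ[P] (A n).indicator Y := by
      intro n
      have h1 : P[W n | ℱ T] =ᵐ[P] P[(A n).indicator Y | ℱ T] + P[φ n * D | ℱ T] :=
        condExp_add (hindY_int n) (hφD_int n) _
      have h2 : P[(A n).indicator Y | ℱ T] = (A n).indicator Y :=
        condExp_of_stronglyMeasurable (ℱ.le T) (hYm.indicator (hAmeas n)) (hindY_int n)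
      filter_upwards [h1, hφD_condzero n] with ω h1 h4
      rw [Pi.add_apply] at h1
      rw [h1, h2, h4, Pi.zero_apply, add_zero]
    have hYneg_K : ∀ n, ∫ ω, (A n).indicator (fun ω => max (-Y ω) 0) ω ∂P
        ≤ ∫ ω, max (-(Y ω + Z ω)) 0 ∂P := by
      intro n
      -- W n = (A n).indicator (Y + Z) pointwise
      have hWapp : ∀ ω, W n ω = (A n).indicator Y ω + φ n ω * D ω := fun ω => rfl
      have hWeq : ∀ ω, W n ω = (A n).indicator (fun ω => Y ω + Z ω) ω := by
        intro ω
        rw [hWapp ω, ← hZA n ω]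
        by_cases h : ω ∈ A n
        · rw [Set.indicator_of_mem h, Set.indicator_of_mem h, Set.indicator_of_mem h]
        · rw [Set.indicator_of_notMem h, Set.indicator_of_notMem h,
            Set.indicator_of_notMem h, add_zero]
      have hWnegInt : Integrable (fun ω => max (-(W n ω)) 0) P := (hW_int n).neg_part
      have hWneg_eq : ∀ ω, max (-(W n ω)) 0
          = (A n).indicator (fun ω => max (-(Y ω + Z ω)) 0) ω := by
        intro ω
        rw [hWeq ω]
        by_cases h : ω ∈ A n
        · rw [Set.indicator_of_mem h, Set.indicator_of_mem h]
        · rw [Set.indicator_of_notMem h, Set.indicator_of_notMem h, neg_zero, max_self]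
      -- conditional Jensen for the negative part
      have hb1 : (fun ω => max (-(P[W n | ℱ T]) ω) 0)
          ≤ᵐ[P] P[fun ω => max (-(W n ω)) 0 | ℱ T] := by
        have hmono1 : P[-(W n) | ℱ T] ≤ᵐ[P] P[fun ω => max (-(W n ω)) 0 | ℱ T] :=
          condExp_mono (hW_int n).neg hWnegInt
            (Eventually.of_forall fun ω => by
              simp only [Pi.neg_apply]; exact le_max_left _ _)
        have hmono2 : (0 : Ω → ℝ) ≤ᵐ[P] P[fun ω => max (-(W n ω)) 0 | ℱ T] :=
          condExp_nonneg (Eventually.of_forall fun ω => by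
            simp only [Pi.zero_apply]; exact le_max_right _ _)
        have hneg' : P[-(W n) | ℱ T] =ᵐ[P] -(P[W n | ℱ T]) := condExp_neg (W n) _
        filter_upwards [hmono1, hmono2, hneg'] with ω h1 h2 h3
        rw [h3, Pi.neg_apply] at h1
        rw [Pi.zero_apply] at h2
        exact max_le h1 h2
      have hkey : (fun ω => (A n).indicator (fun ω => max (-Y ω) 0) ω)
          =ᵐ[P] fun ω => max (-(P[W n | ℱ T]) ω) 0 := by
        filter_upwards [hWcond n] with ω hω
        rw [hω]
        by_cases h : ω ∈ A n
        · rw [Set.indicator_of_mem h, Set.indicator_of_mem h]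
        · rw [Set.indicator_of_notMem h, Set.indicator_of_notMem h, neg_zero, max_self]
      calc ∫ ω, (A n).indicator (fun ω => max (-Y ω) 0) ω ∂P
          = ∫ ω, max (-(P[W n | ℱ T]) ω) 0 ∂P := integral_congr_ae hkey
        _ ≤ ∫ ω, (P[fun ω => max (-(W n ω)) 0 | ℱ T]) ω ∂P :=
            integral_mono_ae integrable_condExp.neg_part integrable_condExp hb1
        _ = ∫ ω, max (-(W n ω)) 0 ∂P := integral_condExp (ℱ.le T)
        _ = ∫ ω, (A n).indicator (fun ω => max (-(Y ω + Z ω)) 0) ω ∂P :=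
            integral_congr_ae (Eventually.of_forall fun ω => hWneg_eq ω)
        _ ≤ ∫ ω, max (-(Y ω + Z ω)) 0 ∂P := by
            refine integral_mono_ae (hnegX.indicator (ℱ.le T _ (hAmeas n))) hnegX
              (Eventually.of_forall fun ω => ?_)
            exact Set.indicator_le_self' (fun x _ => le_max_right _ _) ω
    have hYneg_int : Integrable (fun ω => max (-Y ω) 0) P := by
      refine (mct_aux ?_ (fun ω => le_max_right _ _) hAmono hAcover (fun n => ?_) hYneg_K).1
      · exact ((hYm.mono (ℱ.le T)).measurable.neg.max measurable_const).aestronglyMeasurable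
      · refine Integrable.mono' (integrable_const (n : ℝ))
          ((((hYm.mono (ℱ.le T)).measurable.neg.max measurable_const).indicator
            (ℱ.le T _ (hAmeas n))).aestronglyMeasurable)
          (Eventually.of_forall fun ω => ?_)
        by_cases h : ω ∈ A n
        · rw [Set.indicator_of_mem h]
          rw [Real.norm_eq_abs, abs_of_nonneg (le_max_right _ _)]
          exact max_le (le_trans (neg_le_abs _) h.2) (Nat.cast_nonneg n)
        · rw [Set.indicator_of_notMem h]; simp
    -- induction hypothesis
    obtain ⟨hYint', hYzero⟩ := ih hYneg_int
    -- Step 2: negative part of Z is integrable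
    have hZneg_int : Integrable (fun ω => max (-Z ω) 0) P := by
      refine Integrable.mono' (hnegX.add hYint'.abs)
        (hZm.measurable.neg.max measurable_const).aestronglyMeasurable
        (Eventually.of_forall fun ω => ?_)
      rw [Real.norm_eq_abs, abs_of_nonneg (le_max_right _ _)]
      have h1 : -Z ω ≤ max (-(Y ω + Z ω)) 0 + |Y ω| := by
        have h : -Z ω = -(Y ω + Z ω) + Y ω := by ring
        rw [h]
        exact add_le_add (le_max_left _ _) (le_abs_self _)
      have h2 : (0:ℝ) ≤ max (-(Y ω + Z ω)) 0 + |Y ω| :=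
        add_nonneg (le_max_right _ _) (abs_nonneg _)
      exact max_le h1 h2
    -- Step 3: pos part of Z integrable and integrals equal, via truncation
    have hZA_int : ∀ n, Integrable ((A n).indicator Z) P := by
      intro n
      refine (hφD_int n).congr (Eventually.of_forall fun ω => ?_)
      rw [Pi.mul_apply]
      exact (hZA n ω).symm
    have hZA_zero : ∀ n, ∫ ω, (A n).indicator Z ω ∂P = 0 := by
      intro n
      calc ∫ ω, (A n).indicator Z ω ∂P = ∫ ω, (φ n * D) ω ∂P :=
          integral_congr_ae (Eventually.of_forall fun ω => by rw [hZA n ω, Pi.mul_apply])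
        _ = 0 := hφD_zero n
    have hsplit : ∀ n, ∫ ω, (A n).indicator (fun ω => max (Z ω) 0) ω ∂P
        = ∫ ω, (A n).indicator (fun ω => max (-Z ω) 0) ω ∂P := by
      intro n
      have hpos_eq : ∀ ω, (A n).indicator (fun ω => max (Z ω) 0) ω
          = max ((A n).indicator Z ω) 0 := by
        intro ω
        by_cases h : ω ∈ A n
        · simp [Set.indicator_of_mem h]
        · simp [Set.indicator_of_notMem h]
      have hneg_eq : ∀ ω, (A n).indicator (fun ω => max (-Z ω) 0) ω
          = max (-((A n).indicator Z ω)) 0 := by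
        intro ω
        by_cases h : ω ∈ A n
        · simp [Set.indicator_of_mem h]
        · simp [Set.indicator_of_notMem h]
      have h1 : ∫ ω, (A n).indicator Z ω ∂P
          = ∫ ω, max ((A n).indicator Z ω) 0 ∂P - ∫ ω, max (-((A n).indicator Z ω)) 0 ∂P := by
        rw [← integral_sub (hZA_int n).pos_part (hZA_int n).neg_part]
        exact integral_congr_ae (Eventually.of_forall fun ω =>
          (max_zero_sub_max_neg_zero_eq_self _).symm)
      rw [hZA_zero n] at h1
      rw [integral_congr_ae (Eventually.of_forall hpos_eq),
        integral_congr_ae (Eventually.of_forall hneg_eq)]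
      linarith
    have hZneg_tendsto : Tendsto (fun n => ∫ ω, (A n).indicator (fun ω => max (-Z ω) 0) ω ∂P)
        atTop (𝓝 (∫ ω, max (-Z ω) 0 ∂P)) := by
      refine (mct_aux (K := ∫ ω, max (-Z ω) 0 ∂P) hZneg_int.1 (fun ω => le_max_right _ _)
        hAmono hAcover (fun n => hZneg_int.indicator (ℱ.le T _ (hAmeas n))) (fun n => ?_)).2
      refine integral_mono_ae (hZneg_int.indicator (ℱ.le T _ (hAmeas n))) hZneg_int
        (Eventually.of_forall fun ω => ?_)
      exact Set.indicator_le_self' (fun x _ => le_max_right _ _) ω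
    have hZpos := mct_aux (f := fun ω => max (Z ω) 0)
      (hZm.measurable.max measurable_const).aestronglyMeasurable
      (fun ω => le_max_right _ _) hAmono hAcover
      (fun n => by
        refine ((hZA_int n).pos_part).congr (Eventually.of_forall fun ω => ?_)
        by_cases h : ω ∈ A n
        · simp [Set.indicator_of_mem h]
        · simp [Set.indicator_of_notMem h])
      (K := ∫ ω, max (-Z ω) 0 ∂P)
      (fun n => by
        rw [hsplit n]
        refine integral_mono_ae (hZneg_int.indicator (ℱ.le T _ (hAmeas n))) hZneg_int
          (Eventually.of_forall fun ω => ?_)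
        exact Set.indicator_le_self' (fun x _ => le_max_right _ _) ω)
    obtain ⟨hZpos_int, hZpos_tendsto⟩ := hZpos
    have hZint_eq : ∫ ω, max (Z ω) 0 ∂P = ∫ ω, max (-Z ω) 0 ∂P :=
      tendsto_nhds_unique (hZpos_tendsto.congr hsplit) hZneg_tendsto
    have hZint : Integrable Z P := by
      refine (hZpos_int.sub hZneg_int).congr (Eventually.of_forall fun ω => ?_)
      exact max_zero_sub_max_neg_zero_eq_self _
    have hZzero : ∫ ω, Z ω ∂P = 0 := by
      have h1 : ∫ ω, Z ω ∂P = ∫ ω, max (Z ω) 0 ∂P - ∫ ω, max (-Z ω) 0 ∂P := by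
        rw [← integral_sub hZpos_int hZneg_int]
        exact integral_congr_ae (Eventually.of_forall fun ω =>
          (max_zero_sub_max_neg_zero_eq_self _).symm)
      rw [h1, hZint_eq, sub_self]
    -- conclude
    constructor
    · refine (hYint'.add hZint).congr (Eventually.of_forall fun ω => (hsum ω).symm)
    · rw [integral_congr_ae (Eventually.of_forall fun ω => hsum ω),
        integral_add hYint' hZint, hYzero, hZzero, add_zero]

end Helpers

/-- If `H` is predictable and `S` is a `P`-martingale, and the negative part of the
discrete stochastic integral `(H·S)_T` is `P`-integrable, then
`E_P[((H·S)_T)⁺] = E_P[((H·S)_T)⁻]`. -/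
theorem stmt0 {Ω : Type*} {mΩ : MeasurableSpace Ω} (P : Measure Ω)
    [IsProbabilityMeasure P] (ℱ : Filtration ℕ mΩ) (T : ℕ)
    (S H : ℕ → Ω → ℝ)
    (hS : Martingale S ℱ P)
    (hH : ∀ t : ℕ, 1 ≤ t → StronglyMeasurable[ℱ (t - 1)] (H t))
    (hneg : Integrable (fun ω => max (-(∑ u ∈ Finset.Icc 1 T, H u ω * (S u ω - S (u - 1) ω))) 0) P) :
    ∫ ω, max (∑ u ∈ Finset.Icc 1 T, H u ω * (S u ω - S (u - 1) ω)) 0 ∂P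
      = ∫ ω, max (-(∑ u ∈ Finset.Icc 1 T, H u ω * (S u ω - S (u - 1) ω))) 0 ∂P := by
  obtain ⟨hXint, hXzero⟩ := discrete_integral_key ℱ S H hS hH T hneg
  have h1 : ∫ ω, (∑ u ∈ Finset.Icc 1 T, H u ω * (S u ω - S (u - 1) ω)) ∂P
      = ∫ ω, max (∑ u ∈ Finset.Icc 1 T, H u ω * (S u ω - S (u - 1) ω)) 0 ∂P
        - ∫ ω, max (-(∑ u ∈ Finset.Icc 1 T, H u ω * (S u ω - S (u - 1) ω))) 0 ∂P := by
    rw [← integral_sub hXint.pos_part hXint.neg_part]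
    exact integral_congr_ae (Eventually.of_forall fun ω =>
      (max_zero_sub_max_neg_zero_eq_self _).symm)
  rw [hXzero] at h1
  linarith
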